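/- (Concavity of the Holevo information in the input distribution.) Let X be a finite set and (D_x)_{x∈X} a fixed family of density matrices in M_d(ℂ). For a probability distribution p on X set χ(p) := S(∑_x p(x) D_x) − ∑_x p(x) S(D_x). Then for any finitely many probability distributions p_1,…,p_k on X and nonnegative weights λ_1,…,λ_k with ∑_i λ_i = 1, one has χ(∑_i λ_i p_i) ≥ ∑_i λ_i χ(p_i). -/

import Mathlib

open scoped ComplexOrder

open Classical in
/-- The von Neumann entropy `S(a) = -∑ᵢ λᵢ log λᵢ` of a (positive semidefinite) matrix,
computed from the eigenvalues of a Hermitian matrix (natural logarithm, `0 log 0 = 0`). -/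
noncomputable def vnEntropy {n : Type*} [Fintype n] [DecidableEq n] (a : Matrix n n ℂ) : ℝ :=
  if h : a.IsHermitian then -∑ i, (h.eigenvalues i) * Real.log (h.eigenvalues i) else 0

/-- The Holevo information `χ(p) = S(∑ₓ p(x) Dₓ) - ∑ₓ p(x) S(Dₓ)` of a probability
distribution `p` with respect to a fixed family of density matrices `D`. -/
noncomputable def holevoInfo {X : Type*} [Fintype X] {d : ℕ}
    (D : X → Matrix (Fin d) (Fin d) ℂ) (p : X → ℝ) : ℝ :=
  vnEntropy (∑ x, p x • D x) - ∑ x, p x * vnEntropy (D x)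

open Finset Matrix Real

section Helpers

lemma vnEntropy_eq {n : Type*} [Fintype n] [DecidableEq n] {a : Matrix n n ℂ}
    (h : a.IsHermitian) : vnEntropy a = ∑ i, negMulLog (h.eigenvalues i) := by
  rw [vnEntropy, dif_pos h, ← Finset.sum_neg_distrib]
  exact Finset.sum_congr rfl fun i _ => by rw [negMulLog]; ring

lemma my_jensen {k : Type*} [Fintype k] (w x : k → ℝ)
    (hw : ∀ i, 0 ≤ w i) (hw1 : ∑ i, w i = 1) (hx : ∀ i, 0 ≤ x i) :
    ∑ i, w i * negMulLog (x i) ≤ negMulLog (∑ i, w i * x i) := by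
  have := Real.concaveOn_negMulLog.le_map_sum (t := Finset.univ) (w := w) (p := x)
    (fun i _ => hw i) hw1 (fun i _ => hx i)
  simpa [smul_eq_mul] using this

lemma my_diag_jensen {d : ℕ} (V : Matrix (Fin d) (Fin d) ℂ)
    (hV1 : V * star V = 1) (hV2 : star V * V = 1) (p : Fin d → ℝ) (hp : ∀ k, 0 ≤ p k) :
    ∑ k, negMulLog (p k) ≤
      ∑ j, negMulLog (((V * Matrix.diagonal (fun k => ((p k : ℝ) : ℂ)) * star V) j j).re) := by
  set w : Fin d → Fin d → ℝ := fun j k => Complex.normSq (V j k) with hw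
  have hwnn : ∀ j k, 0 ≤ w j k := fun j k => Complex.normSq_nonneg _
  have hentry : ∀ j, ((V * Matrix.diagonal (fun k => ((p k : ℝ) : ℂ)) * star V) j j).re
      = ∑ k, w j k * p k := by
    intro j
    rw [Matrix.mul_apply, Complex.re_sum]
    refine Finset.sum_congr rfl fun k _ => ?_
    rw [Matrix.mul_diagonal, Matrix.star_apply, Complex.star_def]
    have : V j k * (p k : ℂ) * (starRingEnd ℂ) (V j k) = ((w j k * p k : ℝ) : ℂ) := by
      rw [mul_comm (V j k) _, mul_assoc, Complex.mul_conj]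
      push_cast; ring
    rw [this, Complex.ofReal_re]
  have hrow : ∀ j, ∑ k, w j k = 1 := by
    intro j
    have h1 : (V * star V) j j = 1 := by rw [hV1]; simp [Matrix.one_apply]
    rw [Matrix.mul_apply] at h1
    have he : ∀ k, V j k * (star V) k j = ((w j k : ℝ) : ℂ) := fun k => by
      rw [Matrix.star_apply, Complex.star_def, Complex.mul_conj]
    rw [Finset.sum_congr rfl fun k _ => he k] at h1
    simpa [Complex.re_sum] using congrArg Complex.re h1
  have hcol : ∀ k, ∑ j, w j k = 1 := by
    intro k
    have h1 : (star V * V) k k = 1 := by rw [hV2]; simp [Matrix.one_apply]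
    rw [Matrix.mul_apply] at h1
    have he : ∀ j, (star V) k j * V j k = ((w j k : ℝ) : ℂ) := fun j => by
      rw [Matrix.star_apply, Complex.star_def, mul_comm, Complex.mul_conj]
    rw [Finset.sum_congr rfl fun j _ => he j] at h1
    simpa [Complex.re_sum] using congrArg Complex.re h1
  calc ∑ k, negMulLog (p k) = ∑ k, (∑ j, w j k) * negMulLog (p k) := by
        refine Finset.sum_congr rfl fun k _ => ?_
        rw [hcol k, one_mul]
    _ = ∑ j, ∑ k, w j k * negMulLog (p k) := by
        rw [Finset.sum_comm]; simp [Finset.sum_mul]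
    _ ≤ ∑ j, negMulLog (∑ k, w j k * p k) :=
        Finset.sum_le_sum fun j _ => my_jensen (w j) p (hwnn j) (hrow j) hp
    _ = _ := Finset.sum_congr rfl fun j _ => by rw [hentry j]

lemma vnEntropy_le_diag {d : ℕ} {a : Matrix (Fin d) (Fin d) ℂ} (ha : a.PosSemidef)
    (W : Matrix (Fin d) (Fin d) ℂ) (hW1 : W * star W = 1) (hW2 : star W * W = 1) :
    vnEntropy a ≤ ∑ j, negMulLog (((star W * a * W) j j).re) := by
  have h := ha.1
  rw [vnEntropy_eq h]
  set U := (h.eigenvectorUnitary : Matrix (Fin d) (Fin d) ℂ) with hU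
  have hU1 : U * star U = 1 := (Matrix.mem_unitaryGroup_iff).mp (h.eigenvectorUnitary).2
  have hU2 : star U * U = 1 := (Matrix.mem_unitaryGroup_iff').mp (h.eigenvectorUnitary).2
  have key : star W * a * W
      = (star W * U) * Matrix.diagonal (fun k => ((h.eigenvalues k : ℝ) : ℂ))
        * star (star W * U) := by
    conv_lhs => rw [h.spectral_theorem]
    rw [Unitary.conjStarAlgAut_apply, ← hU]
    rw [StarMul.star_mul, star_star]
    simp only [Matrix.mul_assoc]
    rfl
  rw [key]
  refine my_diag_jensen (star W * U) ?_ ?_ h.eigenvalues (fun k => ha.eigenvalues_nonneg k)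
  · rw [StarMul.star_mul, star_star, Matrix.mul_assoc, ← Matrix.mul_assoc U (star U) W, hU1,
      Matrix.one_mul, hW2]
  · rw [StarMul.star_mul, star_star, Matrix.mul_assoc, ← Matrix.mul_assoc W (star W) U, hW1,
      Matrix.one_mul, hU2]

lemma my_psd_smul {d : ℕ} {M : Matrix (Fin d) (Fin d) ℂ} (h : M.PosSemidef) {r : ℝ}
    (hr : 0 ≤ r) : (r • M).PosSemidef := by
  have hrM : r • M = (r : ℂ) • M := by ext i j; simp [Complex.real_smul]
  rw [hrM]
  constructor
  · have h1 := h.1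
    unfold Matrix.IsHermitian at *
    rw [Matrix.conjTranspose_smul, h1, Complex.star_def, Complex.conj_ofReal]
  · intro x
    exact (h.smul (a := (r : ℂ)) (by exact_mod_cast hr)).2 x

lemma my_psd_sum {ι : Type*} [Fintype ι] {d : ℕ} (f : ι → Matrix (Fin d) (Fin d) ℂ)
    (h : ∀ i, (f i).PosSemidef) : (∑ i, f i).PosSemidef :=
  Finset.sum_induction f _ (fun _ _ ha hb => ha.add hb) Matrix.PosSemidef.zero (fun i _ => h i)

lemma my_psd_diag_re_nonneg {d : ℕ} {M : Matrix (Fin d) (Fin d) ℂ} (h : M.PosSemidef)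
    (j : Fin d) : 0 ≤ (M j j).re := by
  have h2 := h.diag_nonneg (i := j)
  rw [Complex.le_def] at h2
  exact h2.1

lemma vnEntropy_concave {d k : ℕ} (σ : Fin k → Matrix (Fin d) (Fin d) ℂ)
    (hσ : ∀ i, (σ i).PosSemidef) (lam : Fin k → ℝ) (hlam : ∀ i, 0 ≤ lam i)
    (hlam1 : ∑ i, lam i = 1) :
    ∑ i, lam i * vnEntropy (σ i) ≤ vnEntropy (∑ i, lam i • σ i) := by
  set A := ∑ i, lam i • σ i with hA
  have hApsd : A.PosSemidef := my_psd_sum _ fun i => my_psd_smul (hσ i) (hlam i)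
  have h := hApsd.1
  set W := (h.eigenvectorUnitary : Matrix (Fin d) (Fin d) ℂ) with hW
  have hW1 : W * star W = 1 := (Matrix.mem_unitaryGroup_iff).mp (h.eigenvectorUnitary).2
  have hW2 : star W * W = 1 := (Matrix.mem_unitaryGroup_iff').mp (h.eigenvectorUnitary).2
  have hdiagA : star W * A * W = Matrix.diagonal (fun j => ((h.eigenvalues j : ℝ) : ℂ)) := by
    conv_lhs => rw [h.spectral_theorem]
    rw [Unitary.conjStarAlgAut_apply, ← hW]
    rw [← Matrix.mul_assoc, ← Matrix.mul_assoc, hW2, Matrix.one_mul, Matrix.mul_assoc, hW2,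
      Matrix.mul_one]
    rfl
  have hsum : star W * A * W = ∑ i, lam i • (star W * σ i * W) := by
    rw [hA]
    simp [Finset.mul_sum, Finset.sum_mul, Matrix.mul_smul, Matrix.smul_mul]
  have hev : ∀ j, h.eigenvalues j = ∑ i, lam i * ((star W * σ i * W) j j).re := by
    intro j
    have := congrArg (fun M => (M j j).re) (hdiagA.symm.trans hsum)
    simpa [Matrix.diagonal_apply_eq, Matrix.sum_apply, Complex.re_sum, Complex.real_smul,
      Complex.mul_re] using this
  have hdnn : ∀ i j, 0 ≤ ((star W * σ i * W) j j).re := by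
    intro i j
    have : (star W * σ i * W).PosSemidef := by
      rw [Matrix.star_eq_conjTranspose]
      exact (hσ i).conjTranspose_mul_mul_same W
    exact my_psd_diag_re_nonneg this j
  calc ∑ i, lam i * vnEntropy (σ i)
      ≤ ∑ i, lam i * ∑ j, negMulLog (((star W * σ i * W) j j).re) :=
        Finset.sum_le_sum fun i _ =>
          mul_le_mul_of_nonneg_left (vnEntropy_le_diag (hσ i) W hW1 hW2) (hlam i)
    _ = ∑ j, ∑ i, lam i * negMulLog (((star W * σ i * W) j j).re) := by
        rw [Finset.sum_comm]
        exact Finset.sum_congr rfl fun i _ => Finset.mul_sum _ _ _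
    _ ≤ ∑ j, negMulLog (∑ i, lam i * ((star W * σ i * W) j j).re) :=
        Finset.sum_le_sum fun j _ => my_jensen lam _ hlam hlam1 (fun i => hdnn i j)
    _ = ∑ j, negMulLog (h.eigenvalues j) :=
        Finset.sum_congr rfl fun j _ => by rw [← hev j]
    _ = vnEntropy A := (vnEntropy_eq h).symm

end Helpers

/-- Concavity of the Holevo information in the input distribution: for probability
distributions `p₁, …, p_k` and convex weights `λ₁, …, λ_k`,
`χ(∑ᵢ λᵢ pᵢ) ≥ ∑ᵢ λᵢ χ(pᵢ)`. -/
theorem holevo_concave {X : Type*} [Fintype X] {d k : ℕ}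
    (D : X → Matrix (Fin d) (Fin d) ℂ)
    (hD : ∀ x, (D x).PosSemidef) (hDtr : ∀ x, (D x).trace = 1)
    (p : Fin k → X → ℝ) (hp : ∀ i x, 0 ≤ p i x) (hp1 : ∀ i, ∑ x, p i x = 1)
    (lam : Fin k → ℝ) (hlam : ∀ i, 0 ≤ lam i) (hlam1 : ∑ i, lam i = 1) :
    ∑ i, lam i * holevoInfo D (p i) ≤ holevoInfo D (fun x => ∑ i, lam i * p i x) := by
  have hσ : ∀ i, (∑ x, p i x • D x).PosSemidef :=
    fun i => my_psd_sum _ fun x => my_psd_smul (hD x) (hp i x)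
  have hkey := vnEntropy_concave (fun i => ∑ x, p i x • D x) hσ lam hlam hlam1
  have hmix : ∑ x, (∑ i, lam i * p i x) • D x = ∑ i, lam i • ∑ x, p i x • D x := by
    have h1 : ∀ x, (∑ i, lam i * p i x) • D x = ∑ i, lam i • (p i x • D x) := by
      intro x
      rw [Finset.sum_smul]
      exact Finset.sum_congr rfl fun i _ => mul_smul _ _ _
    rw [Finset.sum_congr rfl fun x _ => h1 x, Finset.sum_comm]
    exact Finset.sum_congr rfl fun i _ => (Finset.smul_sum).symm
  have hlin : ∑ x, (∑ i, lam i * p i x) * vnEntropy (D x)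
      = ∑ i, lam i * ∑ x, p i x * vnEntropy (D x) := by
    have h1 : ∀ x, (∑ i, lam i * p i x) * vnEntropy (D x)
        = ∑ i, lam i * (p i x * vnEntropy (D x)) := by
      intro x
      rw [Finset.sum_mul]
      exact Finset.sum_congr rfl fun i _ => mul_assoc _ _ _
    rw [Finset.sum_congr rfl fun x _ => h1 x, Finset.sum_comm]
    exact Finset.sum_congr rfl fun i _ => (Finset.mul_sum _ _ _).symm
  simp only [holevoInfo]
  rw [hmix, hlin]
  have hsplit : ∑ i, lam i * (vnEntropy (∑ x, p i x • D x) - ∑ x, p i x * vnEntropy (D x))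
      = ∑ i, lam i * vnEntropy (∑ x, p i x • D x)
        - ∑ i, lam i * ∑ x, p i x * vnEntropy (D x) := by
    rw [← Finset.sum_sub_distrib]
    exact Finset.sum_congr rfl fun i _ => mul_sub _ _ _
  rw [hsplit]
  exact sub_le_sub_right hkey _
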